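/- Let 1 → Γ' → Γ → Γ'' be an exact sequence of groups (i.e., Γ' is a normal subgroup of Γ with an injective homomorphism Γ/Γ' → Γ''). If Γ' has bounded finite subgroups and Γ'' is strongly Jordan, then Γ is strongly Jordan. -/

import Mathlib

/-- A group has bounded finite subgroups if the orders of its finite subgroups are
uniformly bounded. -/
def HasBoundedFiniteSubgroups (Γ : Type*) [Group Γ] : Prop :=
  ∃ B : ℕ, ∀ H : Subgroup Γ, Finite H → Nat.card H ≤ B

/-- A group is Jordan if there is a constant `J` such that every finite subgroup contains
a normal abelian subgroup of index at most `J`. -/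
def IsJordanGroup (Γ : Type*) [Group Γ] : Prop :=
  ∃ J : ℕ, ∀ G : Subgroup Γ, Finite G →
    ∃ A : Subgroup G, A.Normal ∧ IsMulCommutative A ∧ A.index ≤ J

/-- A group is strongly Jordan if it is Jordan and there is a constant `R` such that every
finite subgroup is generated by at most `R` elements. -/
def IsStronglyJordan (Γ : Type*) [Group Γ] : Prop :=
  IsJordanGroup Γ ∧ ∃ R : ℕ, ∀ G : Subgroup Γ, Finite G →
    ∃ S : Set G, S.Finite ∧ Nat.card S ≤ R ∧ Subgroup.closure S = ⊤

/-!
STATEMENT 6.  Let `1 → Γ' → Γ → Γ''` be an exact sequence of groups (`f : Γ' → Γ`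
injective with normal image, `g : Γ → Γ''` with `ker g = im f`).  If `Γ'` has bounded
finite subgroups and `Γ''` is strongly Jordan, then `Γ` is strongly Jordan.
-/

open Subgroup

section Aux

variable {G Q : Type*} [Group G] [Group Q]

lemma aux_isCommutative_of_le {H K : Subgroup G} (h : H ≤ K) (hK : IsMulCommutative K) :
    IsMulCommutative H := by
  haveI := hK
  constructor; constructor
  rintro ⟨a, ha⟩ ⟨b, hb⟩
  apply Subtype.ext
  simpa using Subgroup.mul_comm_of_mem_isMulCommutative (H := K) (h ha) (h hb)

lemma aux_closure_lift (φ : G →* Q) (T : Set Q) (hT : Subgroup.closure T = ⊤)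
    (T' : Set G) (hT' : T ⊆ φ '' T') :
    Subgroup.closure (T' ∪ (φ.ker : Set G)) = ⊤ := by
  set M := Subgroup.closure (T' ∪ (φ.ker : Set G)) with hM
  have hker : φ.ker ≤ M := fun x hx => Subgroup.subset_closure (Or.inr hx)
  have hT'M : T' ⊆ (M : Set G) := fun x hx => Subgroup.subset_closure (Or.inl hx)
  have hmap : Subgroup.map φ M = ⊤ := by
    rw [eq_top_iff, ← hT, Subgroup.closure_le]
    intro t ht
    obtain ⟨x, hx, rfl⟩ := hT' ht
    exact ⟨x, hT'M hx, rfl⟩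
  have h2 := Subgroup.comap_map_eq (f := φ) (H := M)
  rw [hmap, Subgroup.comap_top, sup_eq_left.mpr hker] at h2
  exact h2.symm

lemma aux_index_centralizer [Finite G] (ψ : G →* Q)
    (hcomm : ∀ x y : G, Commute (ψ x) (ψ y)) (a : G) :
    (Subgroup.centralizer {a}).index ≤ Nat.card ψ.ker := by
  set C := Subgroup.centralizer ({a} : Set G) with hC
  have key : ∀ c : G, a⁻¹ * (c * a * c⁻¹) ∈ ψ.ker := by
    intro c
    have h := (hcomm c a).eq
    simp only [MonoidHom.mem_ker, map_mul, map_inv]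
    rw [h]
    group
  set f0 : G → ψ.ker := fun c => (⟨a⁻¹ * (c * a * c⁻¹), key c⟩ : ψ.ker) with hf0
  have hresp : ∀ c c' : G, (QuotientGroup.leftRel C) c c' → f0 c = f0 c' := by
    intro c c' hcc'
    have hw : c⁻¹ * c' ∈ C := (QuotientGroup.leftRel_apply).mp hcc'
    have hw2 : a * (c⁻¹ * c') = (c⁻¹ * c') * a :=
      Subgroup.mem_centralizer_iff.mp hw a (Set.mem_singleton a)
    apply Subtype.ext
    show a⁻¹ * (c * a * c⁻¹) = a⁻¹ * (c' * a * c'⁻¹)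
    have h3 : (c⁻¹ * c') * a * (c⁻¹ * c')⁻¹ = a := by
      rw [← hw2]; group
    have h4 : c' * a * c'⁻¹ = c * a * c⁻¹ := by
      calc c' * a * c'⁻¹ = c * ((c⁻¹ * c') * a * (c⁻¹ * c')⁻¹) * c⁻¹ := by group
        _ = c * a * c⁻¹ := by rw [h3]
    rw [h4]
  set F : G ⧸ C → ψ.ker := Quotient.lift f0 (fun c c' h => hresp c c' h) with hF
  have hFinj : Function.Injective F := by
    intro x y
    induction x using QuotientGroup.induction_on with | H c =>
    induction y using QuotientGroup.induction_on with | H c' =>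
    intro hxy
    have h1 : f0 c = f0 c' := hxy
    have h2 : c * a * c⁻¹ = c' * a * c'⁻¹ :=
      mul_left_cancel (congrArg (fun z : ↥ψ.ker => (z : G)) h1)
    refine (QuotientGroup.eq).mpr ?_
    apply Subgroup.mem_centralizer_iff.mpr
    intro h hh
    rw [Set.mem_singleton_iff] at hh
    rw [hh]
    have h5 : a * (c⁻¹ * c') = c⁻¹ * (c * a * c⁻¹) * c' := by group
    rw [h5, h2]
    group
  exact (Subgroup.index_eq_card C) ▸ Nat.card_le_card_of_injective F hFinj


lemma aux_centralizer_set_index [Finite G] (B : ℕ)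
    (hB : ∀ a : G, (Subgroup.centralizer {a}).index ≤ B)
    (T : Set G) (hT : T.Finite) :
    (Subgroup.centralizer T).index ≤ B ^ T.ncard := by
  refine Set.Finite.induction_on
    (motive := fun s _ => (Subgroup.centralizer s).index ≤ B ^ s.ncard) T hT ?_ ?_
  · have h0 : Subgroup.centralizer (∅ : Set G) = ⊤ := by
      ext x; simp [Subgroup.mem_centralizer_iff]
    simp [h0, Subgroup.index_top]
  · intro a s ha hs ih
    have hins : Subgroup.centralizer (insert a s) =
        Subgroup.centralizer {a} ⊓ Subgroup.centralizer s := by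
      ext x
      simp only [Subgroup.mem_centralizer_iff, Subgroup.mem_inf, Set.mem_insert_iff,
        Set.mem_singleton_iff]
      constructor
      · intro h; exact ⟨fun y hy => h y (Or.inl hy), fun y hy => h y (Or.inr hy)⟩
      · rintro ⟨h1, h2⟩ y (rfl | hy)
        · exact h1 y rfl
        · exact h2 y hy
    rw [hins, Set.ncard_insert_of_notMem ha hs, pow_succ]
    calc (Subgroup.centralizer {a} ⊓ Subgroup.centralizer s).index
        ≤ (Subgroup.centralizer {a}).index * (Subgroup.centralizer s).index :=
          Subgroup.index_inf_le
      _ ≤ B * B ^ s.ncard := Nat.mul_le_mul (hB a) ih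
      _ = B ^ s.ncard * B := Nat.mul_comm _ _

lemma aux_normalCore_index [Finite G] (H : Subgroup G) :
    H.normalCore.index ≤ Nat.factorial H.index := by
  rw [Subgroup.normalCore_eq_ker, Subgroup.index_ker]
  have h1 : Nat.card (MulAction.toPermHom G (G ⧸ H)).range ≤ Nat.card (Equiv.Perm (G ⧸ H)) :=
    Nat.card_le_card_of_injective _ Subtype.val_injective
  refine h1.trans ?_
  have h2 : Nat.card (Equiv.Perm (G ⧸ H)) = Nat.factorial (Nat.card (G ⧸ H)) := by
    classical
    have := Fintype.ofFinite (G ⧸ H)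
    rw [Nat.card_eq_fintype_card, Nat.card_eq_fintype_card, Fintype.card_perm]
  rw [h2, Subgroup.index_eq_card]


end Aux

lemma aux_main {G Q : Type*} [Group G] [Group Q] [Finite G] (φ : G →* Q) {B J R : ℕ}
    (hker : Nat.card φ.ker ≤ B)
    (hJ : ∀ H : Subgroup Q, Finite H →
      ∃ A : Subgroup H, A.Normal ∧ IsMulCommutative A ∧ A.index ≤ J)
    (hR : ∀ H : Subgroup Q, Finite H →
      ∃ S : Set H, S.Finite ∧ Nat.card S ≤ R ∧ Subgroup.closure S = ⊤) :
    ∃ W : Subgroup G, IsMulCommutative W ∧ W.index ≤ B ^ B * J * B ^ R := by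
  have hB1 : 1 ≤ B := le_trans Nat.card_pos hker
  set N := φ.ker with hN
  set C := Subgroup.centralizer (N : Set G) with hCdef
  have hCker : C = (MulAut.conjNormal (H := N)).ker := by
    ext x
    simp only [Subgroup.mem_centralizer_iff, MonoidHom.mem_ker]
    constructor
    · intro h
      ext n
      show ((MulAut.conjNormal x) n : G) = (n : G)
      rw [MulAut.conjNormal_apply]
      have h2 := h n.1 n.2
      rw [← h2]
      group
    · intro h n hn
      have h2 := congrArg Subtype.val (DFunLike.congr_fun h (⟨n, hn⟩ : N))
      rw [MulAut.conjNormal_apply] at h2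
      have h3 : (x * n * x⁻¹ : G) = n := h2
      calc n * x = (x * n * x⁻¹) * x := by rw [h3]
        _ = x * n := by group
  have hCindex : C.index ≤ B ^ B := by
    rw [hCker, Subgroup.index_ker]
    haveI : Finite (MulAut ↥N) :=
      Finite.of_injective (fun e => (e : ↥N → ↥N)) DFunLike.coe_injective
    have h1 : Nat.card (MulAut.conjNormal (H := N)).range ≤ Nat.card (MulAut ↥N) :=
      Nat.card_le_card_of_injective _ Subtype.val_injective
    have h2 : Nat.card (MulAut ↥N) ≤ Nat.card (↥N → ↥N) :=
      Nat.card_le_card_of_injective _ DFunLike.coe_injective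
    have h3 : Nat.card (↥N → ↥N) = Nat.card ↥N ^ Nat.card ↥N := Nat.card_fun
    calc Nat.card (MulAut.conjNormal (H := N)).range
        ≤ Nat.card (↥N → ↥N) := h1.trans h2
      _ = Nat.card ↥N ^ Nat.card ↥N := h3
      _ ≤ B ^ Nat.card ↥N := Nat.pow_le_pow_left hker _
      _ ≤ B ^ B := Nat.pow_le_pow_right hB1 hker
  set χ := φ.comp C.subtype with hχ
  set Qc := χ.range with hQc
  haveI : Finite ↥Qc := Finite.of_surjective _ χ.rangeRestrict_surjective
  obtain ⟨A'', hA''norm, hA''comm, hA''ind⟩ := hJ Qc inferInstance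
  haveI := hA''comm
  set A3 := A''.map Qc.subtype with hA3
  haveI hA3comm : IsMulCommutative A3 := Subgroup.map_isMulCommutative (H := A'') Qc.subtype
  haveI : Finite ↥A3 :=
    Finite.of_equiv _ (Subgroup.equivMapOfInjective A'' Qc.subtype Qc.subtype_injective).toEquiv
  set A := C ⊓ Subgroup.comap φ A3 with hA
  have hAC : A ≤ C := inf_le_left
  have hrel : A.relIndex C ≤ J := by
    have e1 : A.subgroupOf C = Subgroup.comap χ A3 := by
      rw [hA, Subgroup.subgroupOf, Subgroup.comap_inf, Subgroup.comap_comap]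
      have e0 : Subgroup.comap C.subtype C = ⊤ := by
        rw [← Subgroup.subgroupOf, Subgroup.subgroupOf_self]
      rw [e0, top_inf_eq, hχ]
    have e3 : A3.subgroupOf Qc = A'' := by
      rw [Subgroup.subgroupOf, hA3, Subgroup.comap_map_eq_self_of_injective Qc.subtype_injective]
    calc A.relIndex C = (A.subgroupOf C).index := rfl
      _ = (Subgroup.comap χ A3).index := by rw [e1]
      _ = A3.relIndex χ.range := Subgroup.index_comap A3 χ
      _ = (A3.subgroupOf Qc).index := rfl
      _ = A''.index := by rw [e3]
      _ ≤ J := hA''ind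
  set ψ : ↥A →* ↥A3 := (φ.comp A.subtype).codRestrict A3 (fun a => a.2.2) with hψ
  have hψval : ∀ a : ↥A, (ψ a : Q) = φ a.1 := fun a => rfl
  have hψsurj : Function.Surjective ψ := by
    rintro ⟨y, hy⟩
    have hyQc : y ∈ Qc := Subgroup.map_subtype_le A'' hy
    obtain ⟨c, hc⟩ := hyQc
    refine ⟨⟨c.1, ⟨c.2, ?_⟩⟩, ?_⟩
    · show φ c.1 ∈ A3
      rw [show φ c.1 = y from hc]
      exact hy
    · apply Subtype.ext
      exact hc
  have hψker : Nat.card ψ.ker ≤ B := by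
    have hmem : ∀ k : ↥ψ.ker, (k.1.1 : G) ∈ φ.ker := by
      intro k
      have h1 : ψ k.1 = 1 := k.2
      have h2 : (ψ k.1 : Q) = 1 := by rw [h1]; rfl
      exact h2
    have hinj : Function.Injective (fun k : ↥ψ.ker => (⟨k.1.1, hmem k⟩ : ↥φ.ker)) := by
      intro k k' h
      have h1 : (⟨k.1.1, hmem k⟩ : ↥φ.ker) = ⟨k'.1.1, hmem k'⟩ := h
      have h2 : (k.1.1 : G) = (k'.1.1 : G) := congrArg (fun z : ↥φ.ker => (z : G)) h1
      exact Subtype.ext (Subtype.ext h2)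
    exact (Nat.card_le_card_of_injective _ hinj).trans hker
  have hcommψ : ∀ x y : ↥A, Commute (ψ x) (ψ y) := fun x y => IsMulCommutative.is_comm.comm (ψ x) (ψ y)
  obtain ⟨S0, hS0fin, hS0card, hS0top⟩ := hR A3 inferInstance
  set u := Function.surjInv hψsurj with hu
  set T := u '' S0 with hT
  have hTfin : T.Finite := hS0fin.image u
  have hTsub : S0 ⊆ ψ '' T :=
    fun y hy => ⟨u y, Set.mem_image_of_mem u hy, Function.surjInv_eq hψsurj y⟩
  have htop : Subgroup.closure (T ∪ (ψ.ker : Set ↥A)) = ⊤ :=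
    aux_closure_lift ψ S0 hS0top T hTsub
  set W0 := Subgroup.centralizer T with hW0
  have hW0comm : IsMulCommutative W0 := by
    constructor; constructor
    rintro ⟨w, hw⟩ ⟨w', hw'⟩
    apply Subtype.ext
    show w * w' = w' * w
    have hw'mem : w' ∈ Subgroup.closure (T ∪ (ψ.ker : Set ↥A)) := htop ▸ Subgroup.mem_top w'
    have hle : Subgroup.closure (T ∪ (ψ.ker : Set ↥A)) ≤ Subgroup.centralizer {w} := by
      rw [Subgroup.closure_le]
      rintro x (hx | hx)
      · apply Subgroup.mem_centralizer_iff.mpr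
        intro h hh
        rw [Set.mem_singleton_iff] at hh
        rw [hh]
        exact (Subgroup.mem_centralizer_iff.mp hw x hx).symm
      · apply Subgroup.mem_centralizer_iff.mpr
        intro h hh
        rw [Set.mem_singleton_iff] at hh
        rw [hh]
        apply Subtype.ext
        have hxN : (x : G) ∈ N := by
          have h1 : ψ x = 1 := hx
          have h2 : (ψ x : Q) = 1 := by rw [h1]; rfl
          exact h2
        have hwC : (w : G) ∈ C := w.2.1
        have h3 := Subgroup.mem_centralizer_iff.mp hwC x.1 hxN
        rw [Subgroup.coe_mul, Subgroup.coe_mul]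
        exact h3.symm
    exact Subgroup.mem_centralizer_iff.mp (hle hw'mem) w (Set.mem_singleton w)
  have hW0ind : W0.index ≤ B ^ R := by
    have hb : ∀ a : ↥A, (Subgroup.centralizer {a}).index ≤ B :=
      fun a => (aux_index_centralizer ψ hcommψ a).trans hψker
    refine (aux_centralizer_set_index B hb T hTfin).trans ?_
    apply Nat.pow_le_pow_right hB1
    calc T.ncard ≤ S0.ncard := Set.ncard_image_le hS0fin
      _ = Nat.card S0 := (Nat.card_coe_set_eq S0).symm
      _ ≤ R := hS0card
  haveI := hW0comm
  refine ⟨W0.map A.subtype, Subgroup.map_isMulCommutative (H := W0) A.subtype, ?_⟩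
  rw [Subgroup.index_map_subtype]
  have hAind : A.index = A.relIndex C * C.index := (Subgroup.relIndex_mul_index hAC).symm
  calc W0.index * A.index = W0.index * (A.relIndex C * C.index) := by rw [hAind]
    _ ≤ B ^ R * (J * B ^ B) := Nat.mul_le_mul hW0ind (Nat.mul_le_mul hrel hCindex)
    _ = B ^ B * J * B ^ R := by ring

theorem stronglyJordan_of_extension
    (Γ' Γ Γ'' : Type*) [Group Γ'] [Group Γ] [Group Γ'']
    (f : Γ' →* Γ) (hf : Function.Injective f) (hnorm : f.range.Normal)
    (g : Γ →* Γ'') (hexact : g.ker = f.range)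
    (hΓ' : HasBoundedFiniteSubgroups Γ')
    (hΓ'' : IsStronglyJordan Γ'') :
    IsStronglyJordan Γ := by
  obtain ⟨B, hB⟩ := hΓ'
  obtain ⟨⟨J, hJ⟩, ⟨R, hR⟩⟩ := hΓ''
  have hkercard : ∀ (G : Subgroup Γ), Finite G → Nat.card (g.comp G.subtype).ker ≤ B := by
    intro G hG
    haveI := hG
    set φ := g.comp G.subtype with hφ
    set K1 : Subgroup Γ := φ.ker.map G.subtype with hK1
    have hK1range : K1 ≤ f.range := by
      rintro x ⟨y, hy, rfl⟩
      have h1 : G.subtype y ∈ g.ker := hy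
      rw [hexact] at h1
      exact h1
    set K2 := K1.comap f with hK2
    have hmapK2 : K2.map f = K1 := by
      rw [hK2, Subgroup.map_comap_eq, inf_eq_right.mpr hK1range]
    have e2 : Nat.card φ.ker = Nat.card K1 :=
      Nat.card_congr (Subgroup.equivMapOfInjective φ.ker G.subtype G.subtype_injective).toEquiv
    haveI : Finite K1 :=
      Finite.of_equiv _ (Subgroup.equivMapOfInjective φ.ker G.subtype G.subtype_injective).toEquiv
    haveI : Finite ↥(K2.map f) := by rw [hmapK2]; infer_instance
    haveI : Finite K2 :=
      Finite.of_equiv _ (Subgroup.equivMapOfInjective K2 f hf).toEquiv.symm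
    have e1 : Nat.card K2 = Nat.card K1 := by
      rw [← hmapK2]
      exact Nat.card_congr (Subgroup.equivMapOfInjective K2 f hf).toEquiv
    have h2 := hB K2 inferInstance
    rw [e2, ← e1]
    exact h2
  constructor
  · refine ⟨Nat.factorial (B ^ B * J * B ^ R), ?_⟩
    intro G hG
    haveI := hG
    obtain ⟨W, hWcomm, hWind⟩ := aux_main (g.comp G.subtype) (hkercard G hG) hJ hR
    refine ⟨W.normalCore, inferInstance,
      aux_isCommutative_of_le W.normalCore_le hWcomm, ?_⟩
    exact (aux_normalCore_index W).trans (Nat.factorial_le hWind)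
  · refine ⟨R + B, ?_⟩
    intro G hG
    haveI := hG
    set φ := g.comp G.subtype with hφ
    set ψ := φ.rangeRestrict with hψ
    haveI : Finite ↥φ.range := Finite.of_surjective _ φ.rangeRestrict_surjective
    obtain ⟨S0, hS0fin, hS0card, hS0top⟩ := hR φ.range inferInstance
    have hψsurj : Function.Surjective ψ := φ.rangeRestrict_surjective
    set u := Function.surjInv hψsurj with hu
    set T := u '' S0 with hT
    have hTsub : S0 ⊆ ψ '' T :=
      fun y hy => ⟨u y, Set.mem_image_of_mem u hy, Function.surjInv_eq hψsurj y⟩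
    have htop : Subgroup.closure (T ∪ (ψ.ker : Set ↥G)) = ⊤ :=
      aux_closure_lift ψ S0 hS0top T hTsub
    refine ⟨T ∪ (ψ.ker : Set ↥G), (hS0fin.image u).union (Set.toFinite _), ?_, htop⟩
    have hT1 : T.ncard ≤ R := by
      calc T.ncard ≤ S0.ncard := Set.ncard_image_le hS0fin
        _ = Nat.card S0 := (Nat.card_coe_set_eq S0).symm
        _ ≤ R := hS0card
    have hT2 : (ψ.ker : Set ↥G).ncard ≤ B := by
      have e3 : (ψ.ker : Set ↥G).ncard = Nat.card ψ.ker :=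
        (Nat.card_coe_set_eq ((ψ.ker : Set ↥G))).symm
      rw [e3, hψ, φ.ker_rangeRestrict]
      exact hkercard G hG
    calc Nat.card ↥(T ∪ (ψ.ker : Set ↥G)) = (T ∪ (ψ.ker : Set ↥G)).ncard :=
          Nat.card_coe_set_eq _
      _ ≤ T.ncard + (ψ.ker : Set ↥G).ncard := Set.ncard_union_le _ _
      _ ≤ R + B := Nat.add_le_add hT1 hT2
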